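/- Under the assumptions of the previous setup (A* 𝒞 = 0, X̂ = [𝒞 𝒳] with orthonormal columns), the reduced solution v(t) = exp(t · X̂* A X̂) v₀ with v₀ = X̂* x₀ has its first M components constant in time: for all t, the first block of v(t) equals 𝒞* x₀. Hence the Galerkin-reduced dynamics preserves the linear invariants 𝒞* x̃(t) = 𝒞* x₀ exactly, where x̃(t) = X̂ v(t). -/

import Mathlib

open Matrix

attribute [local instance] Matrix.linftyOpNormedRing Matrix.linftyOpNormedAlgebra

theorem stmt_7 {N M r : ℕ} (A : Matrix (Fin N) (Fin N) ℂ)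
    (C : Matrix (Fin N) (Fin M) ℂ) (X : Matrix (Fin N) (Fin r) ℂ)
    (hC : Aᴴ * C = 0)
    (horth : (Matrix.fromCols C X)ᴴ * Matrix.fromCols C X = 1)
    (x₀ : Fin N → ℂ)
    (v : ℝ → (Fin M ⊕ Fin r) → ℂ)
    (hv : ∀ t : ℝ, v t =
      (NormedSpace.exp
          ((t : ℂ) • ((Matrix.fromCols C X)ᴴ * A * Matrix.fromCols C X))).mulVec
        ((Matrix.fromCols C X)ᴴ.mulVec x₀)) :
    ∀ t : ℝ, (∀ i : Fin M, v t (Sum.inl i) = Cᴴ.mulVec x₀ i) ∧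
      Cᴴ.mulVec ((Matrix.fromCols C X).mulVec (v t)) = Cᴴ.mulVec x₀ := by
  set Xh := Matrix.fromCols C X with hXh
  set B := Xhᴴ * A * Xh with hBdef
  -- Cᴴ * A = 0
  have hCA : Cᴴ * A = 0 := by
    have := congrArg Matrix.conjTranspose hC
    simpa [Matrix.conjTranspose_mul] using this
  -- top rows of B vanish
  have hB : ∀ i j, B (Sum.inl i) j = 0 := by
    intro i j
    have : B = Matrix.fromRows (Cᴴ * A * Xh) (Xᴴ * A * Xh) := by
      rw [hBdef, hXh, Matrix.conjTranspose_fromCols_eq_fromRows_conjTranspose,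
        Matrix.fromRows_mul, Matrix.fromRows_mul]
    rw [this, hCA]
    simp
  intro t
  set tB := (t : ℂ) • B with htB
  have htB0 : ∀ i j, tB (Sum.inl i) j = 0 := by
    intro i j
    simp [htB, hB i j]
  -- powers
  have hpow : ∀ n : ℕ, n ≠ 0 → ∀ i j, (tB ^ n) (Sum.inl i) j = 0 := by
    intro n hn i j
    obtain ⟨k, rfl⟩ := Nat.exists_eq_succ_of_ne_zero hn
    rw [pow_succ']
    rw [Matrix.mul_apply]
    exact Finset.sum_eq_zero fun k' _ => by rw [htB0 i k', zero_mul]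
  -- exponential entries on top rows agree with identity
  have hexp : ∀ i j, (NormedSpace.exp tB) (Sum.inl i) j
      = (1 : Matrix (Fin M ⊕ Fin r) (Fin M ⊕ Fin r) ℂ) (Sum.inl i) j := by
    intro i j
    have hsum : Summable fun n : ℕ => ((n.factorial : ℂ))⁻¹ • tB ^ n :=
      NormedSpace.expSeries_summable' (𝕂 := ℂ) tB
    let f : Matrix (Fin M ⊕ Fin r) (Fin M ⊕ Fin r) ℂ →L[ℂ] ℂ :=
      { toFun := fun E => E (Sum.inl i) j
        map_add' := fun _ _ => rfl
        map_smul' := fun _ _ => rfl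
        cont := ((continuous_apply j).comp (continuous_apply (Sum.inl i))) }
    have := f.map_tsum hsum
    rw [NormedSpace.exp_eq_tsum (𝕂 := ℂ)]
    have hf : ∀ E : Matrix (Fin M ⊕ Fin r) (Fin M ⊕ Fin r) ℂ, f E = E (Sum.inl i) j :=
      fun _ => rfl
    calc (∑' n : ℕ, ((n.factorial : ℂ))⁻¹ • tB ^ n) (Sum.inl i) j
        = f (∑' n : ℕ, ((n.factorial : ℂ))⁻¹ • tB ^ n) := rfl
      _ = ∑' n : ℕ, f (((n.factorial : ℂ))⁻¹ • tB ^ n) := this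
      _ = f (((Nat.factorial 0 : ℂ))⁻¹ • tB ^ 0) := by
            refine tsum_eq_single 0 fun n hn => ?_
            rw [hf]
            simp [Matrix.smul_apply, hpow n hn i j]
      _ = (1 : Matrix (Fin M ⊕ Fin r) (Fin M ⊕ Fin r) ℂ) (Sum.inl i) j := by
            rw [hf]; simp
  -- first part
  have hfirst : ∀ i : Fin M, v t (Sum.inl i) = Cᴴ.mulVec x₀ i := by
    intro i
    have h1 : v t (Sum.inl i) = (Xhᴴ.mulVec x₀) (Sum.inl i) := by
      rw [hv t, Matrix.mulVec, dotProduct]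
      have : ∀ j, (NormedSpace.exp tB) (Sum.inl i) j * (Xhᴴ.mulVec x₀) j
          = (1 : Matrix (Fin M ⊕ Fin r) (Fin M ⊕ Fin r) ℂ) (Sum.inl i) j
            * (Xhᴴ.mulVec x₀) j := fun j => by rw [hexp i j]
      rw [Finset.sum_congr rfl fun j _ => this j]
      have := congrFun (Matrix.one_mulVec (Xhᴴ.mulVec x₀)) (Sum.inl i)
      rw [Matrix.mulVec, dotProduct] at this
      exact this
    rw [h1, hXh, Matrix.conjTranspose_fromCols_eq_fromRows_conjTranspose,
      Matrix.fromRows_mulVec]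
    rfl
  refine ⟨hfirst, ?_⟩
  -- block identities from orthonormality
  have horth' : Matrix.fromBlocks (Cᴴ * C) (Cᴴ * X) (Xᴴ * C) (Xᴴ * X)
      = (1 : Matrix (Fin M ⊕ Fin r) (Fin M ⊕ Fin r) ℂ) := by
    rw [← Matrix.fromRows_mul_fromCols, ←
      Matrix.conjTranspose_fromCols_eq_fromRows_conjTranspose]
    exact horth
  have horth'' := horth'.trans Matrix.fromBlocks_one.symm
  have hCC : Cᴴ * C = 1 := by
    have := congrArg Matrix.toBlocks₁₁ horth''
    rwa [Matrix.toBlocks_fromBlocks₁₁, Matrix.toBlocks_fromBlocks₁₁] at this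
  have hCX : Cᴴ * X = 0 := by
    have := congrArg Matrix.toBlocks₁₂ horth''
    rwa [Matrix.toBlocks_fromBlocks₁₂, Matrix.toBlocks_fromBlocks₁₂] at this
  -- second part
  have hdecomp : v t = Sum.elim (fun i => v t (Sum.inl i)) (fun j => v t (Sum.inr j)) := by
    ext (k | k) <;> rfl
  rw [Matrix.mulVec_mulVec, hXh, Matrix.mul_fromCols, hCC, hCX, hdecomp,
    Matrix.fromCols_mulVec_sumElim]
  ext i
  simp [Matrix.one_mulVec, hfirst i]
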